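/- Let p ∈ [0,1], N a positive integer, and ε ∈ [0,1/8] with 1/2 - ε ≤ p ≤ 1/2 + ε. Let r be chosen uniformly at random from {0,...,N-1}, and let X_1,...,X_{2N} be independent {0,1}-valued random variables, each equal to 1 with probability in [1/2-ε, 1/2+ε]. Suppose N is at least 64 and 3N^{-1/3} + 4ε ≤ 1. Then the probability that r + X_1 + ... + X_{2N} taken modulo 2N lies in {0,...,N-1} is less than 3N^{-1/3} + 4ε. -/
import Mathlib


private lemma ocq_sum_prod_bool {n : ℕ} (g : Fin n → Bool → ℝ) :
    ∑ X : Fin n → Bool, ∏ i, g i (X i) = ∏ i, (g i false + g i true) := by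
  have h := Finset.prod_univ_sum (fun _ : Fin n => (Finset.univ : Finset Bool)) g
  rw [Fintype.piFinset_univ] at h
  rw [← h]
  exact Finset.prod_congr rfl fun i _ => by simp [add_comm]

private lemma ocq_mass {n : ℕ} (p : Fin n → ℝ) :
    ∑ X : Fin n → Bool, ∏ i, (if X i then p i else 1 - p i) = 1 := by
  have := ocq_sum_prod_bool (fun i b => if b then p i else 1 - p i)
  simpa using this

private lemma ocq_cov {n : ℕ} (p : Fin n → ℝ) (j k : Fin n) :
    ∑ X : Fin n → Bool, (∏ i, if X i then p i else 1 - p i) *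
      (((if X j then (1:ℝ) else 0) - p j) * ((if X k then (1:ℝ) else 0) - p k))
      = if j = k then p j * (1 - p j) else 0 := by
  have h : ∀ X : Fin n → Bool,
      (∏ i, if X i then p i else 1 - p i) *
        (((if X j then (1:ℝ) else 0) - p j) * ((if X k then (1:ℝ) else 0) - p k))
      = ∏ i, ((if X i then p i else 1 - p i) *
          ((if i = j then (if X i then (1:ℝ) else 0) - p i else 1) *
           (if i = k then (if X i then (1:ℝ) else 0) - p i else 1))) := by
    intro X
    rw [Finset.prod_mul_distrib, Finset.prod_mul_distrib, Finset.prod_ite_eq',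
      Finset.prod_ite_eq']
    simp
  rw [Finset.sum_congr rfl fun X _ => h X,
    ocq_sum_prod_bool (fun i b => (if b then p i else 1 - p i) *
      ((if i = j then (if b then (1:ℝ) else 0) - p i else 1) *
       (if i = k then (if b then (1:ℝ) else 0) - p i else 1)))]
  have hfac : (∏ i : Fin n,
      ((if (false:Bool) then p i else 1 - p i) *
          ((if i = j then (if (false:Bool) then (1:ℝ) else 0) - p i else 1) *
           (if i = k then (if (false:Bool) then (1:ℝ) else 0) - p i else 1))
        + (if (true:Bool) then p i else 1 - p i) *
          ((if i = j then (if (true:Bool) then (1:ℝ) else 0) - p i else 1) *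
           (if i = k then (if (true:Bool) then (1:ℝ) else 0) - p i else 1))))
      = ∏ i : Fin n, (if i = j then (if i = k then p i * (1 - p i) else 0)
          else (if i = k then 0 else 1)) :=
    Finset.prod_congr rfl fun i _ => by
      by_cases h1 : i = j <;> by_cases h2 : i = k <;> subst_vars <;> simp_all <;> ring
  rw [hfac]
  by_cases hjk : j = k
  · subst hjk
    rw [if_pos rfl]
    have : (∏ i : Fin n, (if i = j then (if i = j then p i * (1 - p i) else 0)
          else (if i = j then 0 else 1)))
        = ∏ i : Fin n, (if i = j then p i * (1 - p i) else 1) :=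
      Finset.prod_congr rfl fun i _ => by by_cases h1 : i = j <;> simp [h1]
    rw [this, Finset.prod_ite_eq']
    simp
  · rw [if_neg hjk]
    apply Finset.prod_eq_zero (Finset.mem_univ j)
    simp [hjk]


private lemma ocq_count (N S : ℕ) (hN : 0 < N) (hS : S ≤ 2 * N) :
    (Finset.univ.filter (fun r : Fin N => ((r : ℕ) + S) % (2 * N) < N)).card
      = if S ≤ N then N - S else S - N := by
  have key : (Finset.univ.filter (fun r : Fin N => ((r : ℕ) + S) % (2 * N) < N)).card
      = ((Finset.range N).filter (fun i => (i + S) % (2 * N) < N)).card := by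
    rw [Finset.card_filter, Finset.card_filter]
    exact Fin.sum_univ_eq_sum_range (fun i => if (i + S) % (2 * N) < N then 1 else 0) N
  rw [key]
  by_cases h : S ≤ N
  · rw [if_pos h]
    have : (Finset.range N).filter (fun i => (i + S) % (2 * N) < N)
        = Finset.range (N - S) := by
      ext i
      simp only [Finset.mem_filter, Finset.mem_range]
      constructor
      · rintro ⟨h1, h2⟩
        rw [Nat.mod_eq_of_lt (by omega)] at h2
        omega
      · intro hi
        refine ⟨by omega, ?_⟩
        rw [Nat.mod_eq_of_lt (by omega)]
        omega
    rw [this, Finset.card_range]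
  · rw [if_neg h]
    push_neg at h
    have : (Finset.range N).filter (fun i => (i + S) % (2 * N) < N)
        = Finset.range N \ Finset.range (2 * N - S) := by
      ext i
      simp only [Finset.mem_filter, Finset.mem_range, Finset.mem_sdiff, not_lt]
      constructor
      · rintro ⟨h1, h2⟩
        refine ⟨h1, ?_⟩
        by_contra hlt
        push_neg at hlt
        rw [Nat.mod_eq_of_lt (by omega)] at h2
        omega
      · rintro ⟨h1, h2⟩
        refine ⟨h1, ?_⟩
        rw [Nat.mod_eq_sub_mod (by omega), Nat.mod_eq_of_lt (by omega)]
        omega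
    rw [this, Finset.card_sdiff_of_subset (by
      intro i hi
      simp only [Finset.mem_range] at *
      omega), Finset.card_range, Finset.card_range]
    omega

/-- One-Clean-Qubit Stability Checking soundness bound: a counter starts uniformly at random
at `r ∈ {0, ..., N-1}`, and each of `2N` independent rounds increments it with probability
`p j ∈ [1/2-ε, 1/2+ε]` (sample space `Fin N × (Fin (2N) → Bool)` with weight
`(1/N) ∏ⱼ (if incremented then p j else 1 - p j)`).  If `N ≥ 64` (a power of two in the
application), `ε ∈ [0, 1/8]` and `3N^{-1/3} + 4ε ≤ 1`, then the probability that the final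
counter value modulo `2N` lies in `{0, ..., N-1}` is less than `3N^{-1/3} + 4ε`. -/
theorem one_clean_qubit_stability (N : ℕ) (hN : 64 ≤ N) (ε : ℝ) (hε0 : 0 ≤ ε)
    (hε : ε ≤ 1 / 8)
    (hcond : 3 * (N : ℝ) ^ (-(1 : ℝ) / 3) + 4 * ε ≤ 1)
    (p : Fin (2 * N) → ℝ) (hp01 : ∀ j, p j ∈ Set.Icc (0 : ℝ) 1)
    (hp : ∀ j, p j ∈ Set.Icc (1 / 2 - ε) (1 / 2 + ε)) :
    (∑ x ∈ Finset.univ.filter (fun x : Fin N × (Fin (2 * N) → Bool) =>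
        ((x.1 : ℕ) + (Finset.univ.filter fun j => x.2 j).card) % (2 * N) < N),
      (1 / (N : ℝ)) * ∏ j, (if x.2 j then p j else 1 - p j))
    < 3 * (N : ℝ) ^ (-(1 : ℝ) / 3) + 4 * ε := by
  have hN0 : 0 < N := by omega
  have hN0' : (0:ℝ) < N := by exact_mod_cast hN0
  have hN1 : (1:ℝ) ≤ N := by exact_mod_cast hN0
  set w : (Fin (2*N) → Bool) → ℝ := fun X => ∏ j, (if X j then p j else 1 - p j) with hw
  have hw0 : ∀ X, 0 ≤ w X := fun X => Finset.prod_nonneg fun j _ => by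
    rcases hp01 j with ⟨h0, h1⟩
    by_cases h : X j <;> simp [h] <;> linarith
  set S : (Fin (2*N) → Bool) → ℕ := fun X => (Finset.univ.filter fun j => X j).card with hS
  have hSle : ∀ X, S X ≤ 2 * N := fun X => by
    simpa using Finset.card_filter_le (Finset.univ : Finset (Fin (2*N))) (fun j => X j)
  -- Step 1: sum over r
  have step1 : (∑ x ∈ Finset.univ.filter (fun x : Fin N × (Fin (2 * N) → Bool) =>
        ((x.1 : ℕ) + (Finset.univ.filter fun j => x.2 j).card) % (2 * N) < N),
      (1 / (N : ℝ)) * ∏ j, (if x.2 j then p j else 1 - p j))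
      = ∑ X : Fin (2*N) → Bool,
          ((Finset.univ.filter (fun r : Fin N => ((r:ℕ) + S X) % (2*N) < N)).card : ℝ)
            * ((1 / N) * w X) := by
    rw [Finset.sum_filter, Fintype.sum_prod_type, Finset.sum_comm]
    refine Finset.sum_congr rfl fun X _ => ?_
    show ∑ r : Fin N, (if ((r : ℕ) + S X) % (2 * N) < N
        then (1 / (N:ℝ)) * w X else 0) = _
    rw [← Finset.sum_filter, Finset.sum_const, nsmul_eq_mul]
  rw [step1]
  -- Step 2: count = |S - N|
  have step2 : ∀ X, ((Finset.univ.filter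
        (fun r : Fin N => ((r:ℕ) + S X) % (2*N) < N)).card : ℝ)
      = |(S X : ℝ) - N| := by
    intro X
    rw [ocq_count N (S X) hN0 (hSle X)]
    by_cases h : S X ≤ N
    · have hc : (S X : ℝ) ≤ N := by exact_mod_cast h
      rw [if_pos h, abs_of_nonpos (by linarith), Nat.cast_sub h]
      ring
    · have hc : (N : ℝ) ≤ S X := by exact_mod_cast (le_of_not_ge h)
      rw [if_neg h, abs_of_nonneg (by linarith), Nat.cast_sub (le_of_not_ge h)]
  rw [Finset.sum_congr rfl fun X _ => by rw [step2 X]]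
  -- abbreviations
  set μ : ℝ := ∑ j, p j with hμdef
  have hmass : ∑ X : Fin (2*N) → Bool, w X = 1 := ocq_mass p
  have hScast : ∀ X : Fin (2*N) → Bool,
      (S X : ℝ) - μ = ∑ j, ((if X j then (1:ℝ) else 0) - p j) := by
    intro X
    rw [Finset.sum_sub_distrib]
    congr 1
    rw [hS]
    simp only [Finset.card_filter]
    push_cast
    rfl
  -- variance
  have hVar : ∑ X : Fin (2*N) → Bool, w X * ((S X:ℝ) - μ)^2
      = ∑ j, p j * (1 - p j) := by
    have hpt : ∀ X : Fin (2*N) → Bool, w X * ((S X:ℝ) - μ)^2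
        = ∑ j, ∑ k, w X * (((if X j then (1:ℝ) else 0) - p j)
            * ((if X k then (1:ℝ) else 0) - p k)) := by
      intro X
      rw [hScast X, sq, Finset.sum_mul_sum]
      rw [Finset.mul_sum]
      exact Finset.sum_congr rfl fun j _ => by rw [Finset.mul_sum]
    rw [Finset.sum_congr rfl fun X _ => hpt X, Finset.sum_comm]
    rw [Finset.sum_congr rfl fun j _ => Finset.sum_comm]
    rw [Finset.sum_congr rfl fun j _ => Finset.sum_congr rfl fun k _ => ocq_cov p j k]
    simp
  have hVarle : ∑ j, p j * (1 - p j) ≤ (N : ℝ) := by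
    calc ∑ j, p j * (1 - p j) ≤ ∑ _j : Fin (2*N), (1/4 : ℝ) :=
          Finset.sum_le_sum fun j _ => by nlinarith [(hp01 j).1, (hp01 j).2, sq_nonneg (p j - 1/2)]
      _ = 2 * N * (1/4) := by
          rw [Finset.sum_const, Finset.card_univ, Fintype.card_fin, nsmul_eq_mul]
          push_cast; ring
      _ ≤ N := by linarith
  -- Cauchy–Schwarz
  set B : ℝ := ∑ X : Fin (2*N) → Bool, w X * |(S X:ℝ) - μ| with hB
  have hB0 : (0:ℝ) ≤ B := Finset.sum_nonneg fun X _ =>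
    mul_nonneg (hw0 X) (abs_nonneg _)
  have hCS : B^2 ≤ (N : ℝ) := by
    have hcs := Finset.sum_mul_sq_le_sq_mul_sq Finset.univ
      (fun X : Fin (2*N) → Bool => Real.sqrt (w X))
      (fun X => Real.sqrt (w X) * |(S X:ℝ) - μ|)
    have e1 : ∀ X : Fin (2*N) → Bool,
        Real.sqrt (w X) * (Real.sqrt (w X) * |(S X:ℝ) - μ|) = w X * |(S X:ℝ) - μ| := by
      intro X; rw [← mul_assoc, Real.mul_self_sqrt (hw0 X)]
    have e2 : ∀ X : Fin (2*N) → Bool, Real.sqrt (w X) ^ 2 = w X :=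
      fun X => Real.sq_sqrt (hw0 X)
    have e3 : ∀ X : Fin (2*N) → Bool,
        (Real.sqrt (w X) * |(S X:ℝ) - μ|) ^ 2 = w X * ((S X:ℝ) - μ)^2 := by
      intro X; rw [mul_pow, Real.sq_sqrt (hw0 X), sq_abs]
    rw [Finset.sum_congr rfl fun X _ => e1 X, Finset.sum_congr rfl fun X _ => e2 X,
      Finset.sum_congr rfl fun X _ => e3 X, hmass, one_mul, hVar] at hcs
    exact hcs.trans hVarle
  have hBle : B ≤ Real.sqrt N := by
    rw [show B = Real.sqrt (B^2) by rw [Real.sqrt_sq hB0]]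
    exact Real.sqrt_le_sqrt hCS
  -- mean deviation
  have hμN : |μ - N| ≤ 2 * N * ε := by
    have h1 : μ - N = ∑ j : Fin (2*N), (p j - 1/2) := by
      rw [Finset.sum_sub_distrib, Finset.sum_const, Finset.card_univ,
        Fintype.card_fin, nsmul_eq_mul]
      push_cast [hμdef]; ring
    rw [h1]
    calc |∑ j : Fin (2*N), (p j - 1/2)| ≤ ∑ j : Fin (2*N), |p j - 1/2| :=
          Finset.abs_sum_le_sum_abs _ _
      _ ≤ ∑ _j : Fin (2*N), ε := Finset.sum_le_sum fun j _ =>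
          abs_le.2 ⟨by linarith [(hp j).1], by linarith [(hp j).2]⟩
      _ = 2 * N * ε := by
          rw [Finset.sum_const, Finset.card_univ, Fintype.card_fin, nsmul_eq_mul]
          push_cast; ring
  -- pointwise triangle inequality
  have htri : ∑ X : Fin (2*N) → Bool, |(S X:ℝ) - N| * ((1/N) * w X)
      ≤ (1/N) * (B + 2 * N * ε) := by
    have h1 : ∀ X : Fin (2*N) → Bool, |(S X:ℝ) - N| * ((1/N) * w X)
        ≤ (1/N) * (w X * |(S X:ℝ) - μ| + w X * |μ - (N:ℝ)|) := by
      intro X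
      have htr : |(S X:ℝ) - N| ≤ |(S X:ℝ) - μ| + |μ - (N:ℝ)| := abs_sub_le _ _ _
      have := mul_le_mul_of_nonneg_left htr (hw0 X)
      calc |(S X:ℝ) - N| * ((1/N) * w X) = (1/N) * (w X * |(S X:ℝ) - N|) := by ring
        _ ≤ (1/N) * (w X * (|(S X:ℝ) - μ| + |μ - (N:ℝ)|)) := by
            apply mul_le_mul_of_nonneg_left _ (by positivity)
            exact mul_le_mul_of_nonneg_left htr (hw0 X)
        _ = (1/N) * (w X * |(S X:ℝ) - μ| + w X * |μ - (N:ℝ)|) := by ring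
    calc ∑ X : Fin (2*N) → Bool, |(S X:ℝ) - N| * ((1/N) * w X)
        ≤ ∑ X : Fin (2*N) → Bool,
            (1/N) * (w X * |(S X:ℝ) - μ| + w X * |μ - (N:ℝ)|) :=
          Finset.sum_le_sum fun X _ => h1 X
      _ = (1/N) * (B + (∑ X : Fin (2*N) → Bool, w X) * |μ - (N:ℝ)|) := by
          rw [← Finset.mul_sum, Finset.sum_add_distrib, ← Finset.sum_mul, hB]
      _ ≤ (1/N) * (B + 2 * N * ε) := by
          rw [hmass, one_mul]
          have : |μ - (N:ℝ)| ≤ 2 * N * ε := hμN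
          apply mul_le_mul_of_nonneg_left _ (by positivity)
          linarith
  refine lt_of_le_of_lt htri ?_
  -- final numeric inequality
  have hsqrt : Real.sqrt N ≤ (N:ℝ) ^ ((2:ℝ)/3) := by
    rw [Real.sqrt_eq_rpow]
    exact Real.rpow_le_rpow_of_exponent_le hN1 (by norm_num)
  have hpow : (N:ℝ) ^ (-(1:ℝ)/3) * N = (N:ℝ) ^ ((2:ℝ)/3) := by
    rw [show ((2:ℝ)/3) = (-(1:ℝ)/3) + 1 by norm_num, Real.rpow_add hN0',
      Real.rpow_one]
  have hpowpos : (0:ℝ) < (N:ℝ) ^ ((2:ℝ)/3) := Real.rpow_pos_of_pos hN0' _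
  have key : B + 2 * N * ε < (3 * (N : ℝ) ^ (-(1 : ℝ) / 3) + 4 * ε) * N := by
    have : (3 * (N : ℝ) ^ (-(1 : ℝ) / 3) + 4 * ε) * N
        = 3 * (N:ℝ) ^ ((2:ℝ)/3) + 4 * ε * N := by
      rw [← hpow]; ring
    rw [this]
    have hB' : B ≤ Real.sqrt N := hBle
    nlinarith [hsqrt, hpowpos, mul_nonneg (mul_nonneg (by norm_num : (0:ℝ) ≤ 2) hN0'.le) hε0]
  calc (1/(N:ℝ)) * (B + 2 * N * ε)
      < (1/(N:ℝ)) * ((3 * (N : ℝ) ^ (-(1 : ℝ) / 3) + 4 * ε) * N) := by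
        apply mul_lt_mul_of_pos_left key (by positivity)
    _ = 3 * (N : ℝ) ^ (-(1 : ℝ) / 3) + 4 * ε := by
        field_simp
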